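/- arXiv:1312.6711 — 6 statements merged into one kernel-verified Lean document; each statement's English description precedes it below -/
import Mathlib

section
/- Let $k$ be a complete nonarchimedean valued field and $\mathcal{A}$ a Banach $k$-algebra whose norm takes values in the value group of $k$ (i.e. $\|\mathcal{A}\| \subseteq |k|$). Then for any idempotent $\bar{e}$ in the residue algebra $\overline{\mathcal{A}} = \mathcal{A}(1)/\mathcal{A}(1-)$, there exists an idempotent $e \in \mathcal{A}(1)$ whose image in $\overline{\mathcal{A}}$ is $\bar{e}$. -/
open IsUltrametricDist

section Aux
variable {A : Type*} [NormedRing A] [NormOneClass A] [IsUltrametricDist A]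

omit [NormOneClass A] in
lemma my_norm_sub_le_max (x y : A) : ‖x - y‖ ≤ max ‖x‖ ‖y‖ := by
  rw [sub_eq_add_neg]
  simpa using norm_add_le_max x (-y)

/-- the Newton step -/
noncomputable def nstep (e : A) : A := e + (1 - (e+e)) * (e*e - e)

lemma nstep_sub (e : A) (he : ‖e‖ ≤ 1) : ‖nstep e - e‖ ≤ ‖e*e - e‖ := by
  have h1 : ‖(1:A) - (e+e)‖ ≤ 1 := by
    refine (my_norm_sub_le_max _ _).trans ?_
    simp only [norm_one, max_le_iff, le_refl, true_and]
    exact (norm_add_le_max e e).trans (by simp [he])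
  calc ‖nstep e - e‖ = ‖(1 - (e+e)) * (e*e - e)‖ := by rw [nstep, add_sub_cancel_left]
    _ ≤ ‖(1:A) - (e+e)‖ * ‖e*e - e‖ := norm_mul_le _ _
    _ ≤ 1 * ‖e*e - e‖ := mul_le_mul_of_nonneg_right h1 (norm_nonneg _)
    _ = ‖e*e - e‖ := one_mul _

lemma norm_sq_sub_le (e : A) (he : ‖e‖ ≤ 1) : ‖e*e - e‖ ≤ 1 := by
  refine (my_norm_sub_le_max _ _).trans ?_
  simp only [max_le_iff]
  exact ⟨(norm_mul_le _ _).trans (by nlinarith [norm_nonneg e]), he⟩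

lemma nstep_norm (e : A) (he : ‖e‖ ≤ 1) : ‖nstep e‖ ≤ 1 := by
  have h : nstep e = e + (nstep e - e) := by abel
  rw [h]
  refine (norm_add_le_max _ _).trans ?_
  simp only [max_le_iff]
  exact ⟨he, (nstep_sub e he).trans (norm_sq_sub_le e he)⟩

lemma nstep_key (e : A) (he : ‖e‖ ≤ 1) :
    ‖nstep e * nstep e - nstep e‖ ≤ ‖e*e - e‖ ^ 2 := by
  have hident : nstep e * nstep e - nstep e
      = ((0:A) - (1 + (e+e))) * (((1:A)+1+1) - (e+e)) * ((e*e - e) * (e*e - e)) := by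
    rw [nstep]; noncomm_ring
  have h2e : ‖e + e‖ ≤ 1 := (norm_add_le_max e e).trans (by simp [he])
  have h1 : ‖(0:A) - (1 + (e+e))‖ ≤ 1 := by
    refine (my_norm_sub_le_max _ _).trans ?_
    simp only [norm_zero, max_le_iff]
    constructor
    · linarith [norm_nonneg ((1:A) + (e+e))]
    · exact (norm_add_le_max 1 (e+e)).trans (by simp [h2e])
  have h3 : ‖((1:A)+1+1) - (e+e)‖ ≤ 1 := by
    refine (my_norm_sub_le_max _ _).trans ?_
    simp only [max_le_iff]
    refine ⟨(norm_add_le_max _ _).trans ?_, h2e⟩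
    simp only [norm_one, max_le_iff, le_refl, and_true]
    exact (norm_add_le_max 1 1).trans (by simp)
  have h13 : ‖((0:A) - (1 + (e+e))) * (((1:A)+1+1) - (e+e))‖ ≤ 1 :=
    (norm_mul_le _ _).trans (mul_le_one₀ h1 (norm_nonneg _) h3)
  calc ‖nstep e * nstep e - nstep e‖
      ≤ ‖((0:A) - (1 + (e+e))) * (((1:A)+1+1) - (e+e))‖ * ‖(e*e - e) * (e*e - e)‖ := by
        rw [hident]; exact norm_mul_le _ _
    _ ≤ 1 * (‖e*e - e‖ * ‖e*e - e‖) :=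
        mul_le_mul h13 (norm_mul_le _ _) (norm_nonneg _) zero_le_one
    _ = ‖e*e - e‖ ^ 2 := by ring

end Aux

/-- Lifting of idempotents: in a Banach algebra over a complete nonarchimedean field whose
norm takes values in `|k|`, any idempotent of the residue algebra `𝒜(1)/𝒜(1-)`
(given by a lift `a ∈ 𝒜(1)` with `‖a² - a‖ < 1`) lifts to an honest idempotent
`e ∈ 𝒜(1)` with the same reduction (`‖e - a‖ < 1`). -/
theorem idempotent_lift {k A : Type*} [NontriviallyNormedField k] [CompleteSpace k]
    [IsUltrametricDist k] [NormedRing A] [NormOneClass A] [IsUltrametricDist A]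
    [CompleteSpace A] [NormedAlgebra k A]
    (hval : ∀ a : A, ∃ c : k, ‖a‖ = ‖c‖)
    (a : A) (ha : ‖a‖ ≤ 1) (hid : ‖a * a - a‖ < 1) :
    ∃ e : A, e * e = e ∧ ‖e‖ ≤ 1 ∧ ‖e - a‖ < 1 := by
  set δ := ‖a * a - a‖ with hδ
  have hδ0 : 0 ≤ δ := norm_nonneg _
  set u : ℕ → A := fun n => nstep^[n] a with hu
  have hu0 : u 0 = a := rfl
  have husucc : ∀ n, u (n+1) = nstep (u n) := fun n => Function.iterate_succ_apply' _ _ _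
  have hnorm : ∀ n, ‖u n‖ ≤ 1 := by
    intro n; induction n with
    | zero => exact ha
    | succ n ih => rw [husucc]; exact nstep_norm _ ih
  have hx : ∀ n, ‖u n * u n - u n‖ ≤ δ ^ (2 ^ n) := by
    intro n; induction n with
    | zero => simp [hu0, hδ]
    | succ n ih =>
        rw [husucc]
        refine (nstep_key _ (hnorm n)).trans ?_
        calc ‖u n * u n - u n‖ ^ 2 ≤ (δ ^ (2^n)) ^ 2 := pow_le_pow_left₀ (norm_nonneg _) ih 2
          _ = δ ^ (2 ^ (n+1)) := by rw [← pow_mul, pow_succ]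
  have hdiff0 : ∀ n, ‖u n - u (n+1)‖ ≤ δ ^ (2 ^ n) := by
    intro n
    rw [husucc, ← norm_neg, neg_sub]
    exact (nstep_sub _ (hnorm n)).trans (hx n)
  have hxd : ∀ n, δ ^ (2^n) ≤ δ ^ n :=
    fun n => pow_le_pow_of_le_one hδ0 hid.le (Nat.lt_two_pow_self (n := n)).le
  have hcauchy : CauchySeq u :=
    SeminormedAddCommGroup.cauchySeq_of_le_geometric (C := 1) hid
      (fun n => by simpa using (hdiff0 n).trans (hxd n))
  obtain ⟨e, hlim⟩ := cauchySeq_tendsto_of_complete hcauchy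
  have hda : ∀ n, ‖u n - a‖ ≤ δ := by
    intro n; induction n with
    | zero => simp [hu0, hδ0]
    | succ n ih =>
        have h : u (n+1) - a = (u (n+1) - u n) + (u n - a) := (sub_add_sub_cancel _ _ _).symm
        rw [h]
        refine (norm_add_le_max _ _).trans (max_le ?_ ih)
        rw [← norm_neg, neg_sub]
        refine (hdiff0 n).trans ?_
        calc δ ^ (2^n) ≤ δ ^ 1 :=
              pow_le_pow_of_le_one hδ0 hid.le Nat.one_le_two_pow
          _ = δ := pow_one δ
  refine ⟨e, ?_, ?_, ?_⟩
  · have hlim2 : Filter.Tendsto (fun n => u n * u n - u n) Filter.atTop (nhds (e*e - e)) :=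
      (hlim.mul hlim).sub hlim
    have hzero : Filter.Tendsto (fun n => u n * u n - u n) Filter.atTop (nhds 0) := by
      rw [tendsto_zero_iff_norm_tendsto_zero]
      refine squeeze_zero (fun n => norm_nonneg _) (fun n => (hx n).trans (hxd n)) ?_
      exact tendsto_pow_atTop_nhds_zero_of_lt_one hδ0 hid
    exact sub_eq_zero.mp (tendsto_nhds_unique hlim2 hzero)
  · exact le_of_tendsto hlim.norm (Filter.Eventually.of_forall hnorm)
  · refine lt_of_le_of_lt ?_ hid
    exact le_of_tendsto ((hlim.sub tendsto_const_nhds).norm)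
      (Filter.Eventually.of_forall hda)
end

section
/- Let $\mathcal{A}$ be a Banach $k$-algebra over a complete nonarchimedean field $k$, and let $P_0 \in \mathcal{A}(1)$ satisfy $\|P_0^2 - P_0\| < 1$. Define the sequence $P_{i+1} = -2P_i^3 + 3P_i^2$. Then $\|P_{i}^2 - P_{i}\| \le \|P_0^2 - P_0\|^{2^i}$ for all $i$, and the sequence $(P_i)$ converges to an idempotent $e \in \mathcal{A}(1)$ with $\|e - P_0\| < 1$. -/
open IsUltrametricDist Filter

/-- Newton-type iteration for idempotents: if `‖P₀‖ ≤ 1` and `‖P₀² - P₀‖ < 1` in a Banach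
algebra over a complete nonarchimedean field, the sequence `P_{i+1} = -2P_i³ + 3P_i²`
satisfies `‖P_i² - P_i‖ ≤ ‖P₀² - P₀‖^(2^i)` and converges to an idempotent `e ∈ 𝒜(1)`
with `‖e - P₀‖ < 1`. -/
theorem newton_idempotent {k A : Type*} [NontriviallyNormedField k] [CompleteSpace k]
    [IsUltrametricDist k] [NormedRing A] [NormOneClass A] [IsUltrametricDist A]
    [CompleteSpace A] [NormedAlgebra k A]
    (P : ℕ → A) (hP0 : ‖P 0‖ ≤ 1) (h : ‖P 0 * P 0 - P 0‖ < 1)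
    (hrec : ∀ i, P (i + 1) = -2 * (P i) ^ 3 + 3 * (P i) ^ 2) :
    (∀ i, ‖P i * P i - P i‖ ≤ ‖P 0 * P 0 - P 0‖ ^ (2 ^ i)) ∧
    ∃ e : A, Filter.Tendsto P Filter.atTop (nhds e) ∧ e * e = e ∧ ‖e‖ ≤ 1 ∧ ‖e - P 0‖ < 1 := by
  set r : ℝ := ‖P 0 * P 0 - P 0‖ with hr
  have hr0 : 0 ≤ r := norm_nonneg _
  have hnat : ∀ n : ℕ, ‖(n : A)‖ ≤ 1 := fun n => norm_natCast_le_one A n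
  have h2A : ‖(2 : A)‖ ≤ 1 := by simpa using hnat 2
  have h3A : ‖(3 : A)‖ ≤ 1 := by simpa using hnat 3
  have hsub : ∀ x y : A, ‖x - y‖ ≤ max ‖x‖ ‖y‖ := fun x y => by
    simpa [sub_eq_add_neg] using norm_add_le_max x (-y)
  -- all iterates have norm ≤ 1
  have hnorm : ∀ i, ‖P i‖ ≤ 1 := by
    intro i
    induction i with
    | zero => exact hP0
    | succ i ih =>
      rw [hrec i]
      refine le_trans (norm_add_le_max _ _) (max_le ?_ ?_)
      · rw [neg_mul, norm_neg]
        calc ‖(2 : A) * P i ^ 3‖ ≤ ‖(2 : A)‖ * ‖P i ^ 3‖ := norm_mul_le _ _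
          _ ≤ 1 * 1 := by
              refine mul_le_mul h2A
                (le_trans (_root_.norm_pow_le _ _) (pow_le_one₀ (norm_nonneg _) ih))
                (norm_nonneg _) zero_le_one
          _ = 1 := one_mul 1
      · calc ‖(3 : A) * P i ^ 2‖ ≤ ‖(3 : A)‖ * ‖P i ^ 2‖ := norm_mul_le _ _
          _ ≤ 1 * 1 := by
              refine mul_le_mul h3A
                (le_trans (_root_.norm_pow_le _ _) (pow_le_one₀ (norm_nonneg _) ih))
                (norm_nonneg _) zero_le_one
          _ = 1 := one_mul 1
  -- the key quadratic estimate
  have hq : ∀ i, ‖P i * P i - P i‖ ≤ r ^ (2 ^ i) := by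
    intro i
    induction i with
    | zero => simp [hr]
    | succ i ih =>
      have hid : P (i + 1) * P (i + 1) - P (i + 1)
          = (2 * P i - 3) * (2 * P i + 1) * (P i * P i - P i) ^ 2 := by
        rw [hrec i]; noncomm_ring
      have hc : ‖(2 * P i - 3) * (2 * P i + 1)‖ ≤ 1 := by
        have h1 : ‖2 * P i - 3‖ ≤ 1 := by
          refine le_trans (hsub _ _) (max_le ?_ h3A)
          calc ‖(2 : A) * P i‖ ≤ ‖(2 : A)‖ * ‖P i‖ := norm_mul_le _ _
            _ ≤ 1 * 1 := mul_le_mul h2A (hnorm i) (norm_nonneg _)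
                zero_le_one
            _ = 1 := one_mul 1
        have h2 : ‖2 * P i + 1‖ ≤ 1 := by
          refine le_trans (norm_add_le_max _ _) (max_le ?_ (by simp))
          calc ‖(2 : A) * P i‖ ≤ ‖(2 : A)‖ * ‖P i‖ := norm_mul_le _ _
            _ ≤ 1 * 1 := mul_le_mul h2A (hnorm i) (norm_nonneg _)
                zero_le_one
            _ = 1 := one_mul 1
        calc ‖(2 * P i - 3) * (2 * P i + 1)‖ ≤ ‖2 * P i - 3‖ * ‖2 * P i + 1‖ := norm_mul_le _ _
          _ ≤ 1 * 1 := mul_le_mul h1 h2 (norm_nonneg _) zero_le_one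
          _ = 1 := one_mul 1
      calc ‖P (i + 1) * P (i + 1) - P (i + 1)‖
          ≤ ‖(2 * P i - 3) * (2 * P i + 1)‖ * ‖(P i * P i - P i) ^ 2‖ := by
            rw [hid]; exact norm_mul_le _ _
        _ ≤ 1 * ‖P i * P i - P i‖ ^ 2 := by
            exact mul_le_mul hc (_root_.norm_pow_le _ _) (norm_nonneg _) zero_le_one
        _ = ‖P i * P i - P i‖ ^ 2 := one_mul _
        _ ≤ (r ^ (2 ^ i)) ^ 2 := pow_le_pow_left₀ (norm_nonneg _) ih 2
        _ = r ^ (2 ^ (i + 1)) := by rw [← pow_mul, pow_succ]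
  refine ⟨hq, ?_⟩
  -- successive differences
  have hdiff : ∀ i, ‖P (i + 1) - P i‖ ≤ r ^ (2 ^ i) := by
    intro i
    have hid : P (i + 1) - P i = -(2 * P i - 1) * (P i * P i - P i) := by
      rw [hrec i]; noncomm_ring
    have h1 : ‖-(2 * P i - 1)‖ ≤ 1 := by
      rw [norm_neg]
      refine le_trans (hsub _ _) (max_le ?_ (by simp))
      calc ‖(2 : A) * P i‖ ≤ ‖(2 : A)‖ * ‖P i‖ := norm_mul_le _ _
        _ ≤ 1 * 1 := mul_le_mul h2A (hnorm i) (norm_nonneg _) zero_le_one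
        _ = 1 := one_mul 1
    calc ‖P (i + 1) - P i‖ ≤ ‖-(2 * P i - 1)‖ * ‖P i * P i - P i‖ := by
          rw [hid]; exact norm_mul_le _ _
      _ ≤ 1 * (r ^ (2 ^ i)) := mul_le_mul h1 (hq i) (norm_nonneg _) zero_le_one
      _ = r ^ (2 ^ i) := one_mul _
  have hdiff' : ∀ i, ‖P (i + 1) - P i‖ ≤ r ^ i := fun i =>
    le_trans (hdiff i) (pow_le_pow_of_le_one hr0 h.le (Nat.le_of_lt (Nat.lt_two_pow_self (n := i))))
  -- Cauchy property and convergence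
  have hcauchy : CauchySeq P := by
    refine cauchySeq_of_le_geometric r 1 h ?_
    intro n
    rw [dist_eq_norm, one_mul, norm_sub_rev]
    exact hdiff' n
  obtain ⟨e, he⟩ := cauchySeq_tendsto_of_complete hcauchy
  refine ⟨e, he, ?_, ?_, ?_⟩
  · -- idempotent
    have h1 : Tendsto (fun i => P i * P i - P i) atTop (nhds (e * e - e)) :=
      (he.mul he).sub he
    have h2 : Tendsto (fun i => P i * P i - P i) atTop (nhds 0) := by
      rw [tendsto_zero_iff_norm_tendsto_zero]
      have hub : Tendsto (fun i : ℕ => r ^ (2 ^ i)) atTop (nhds 0) :=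
        (tendsto_pow_atTop_nhds_zero_of_lt_one hr0 h).comp
          (tendsto_pow_atTop_atTop_of_one_lt (one_lt_two : 1 < (2 : ℕ)))
      exact squeeze_zero (fun i => norm_nonneg _) hq hub
    have := tendsto_nhds_unique h1 h2
    rwa [sub_eq_zero] at this
  · exact le_of_tendsto (he.norm) (Filter.Eventually.of_forall hnorm)
  · -- distance to P 0
    have hP0dist : ∀ i, ‖P i - P 0‖ ≤ r := by
      intro i
      induction i with
      | zero => simp [hr0]
      | succ i ih =>
        have : P (i + 1) - P 0 = (P (i + 1) - P i) + (P i - P 0) := by abel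
        rw [this]
        refine le_trans (norm_add_le_max _ _) (max_le ?_ ih)
        refine le_trans (hdiff i) (le_trans (pow_le_pow_of_le_one hr0 h.le
          (Nat.one_le_two_pow)) (le_of_eq (pow_one r)))
      ;
    have : ‖e - P 0‖ ≤ r :=
      le_of_tendsto ((he.sub tendsto_const_nhds).norm) (Filter.Eventually.of_forall hP0dist)
    exact lt_of_le_of_lt this h
end

section
/- Let $\mathcal{A}$ be a Banach $k$-algebra with $\|\mathcal{A}\| \subseteq |k|$ over a complete nonarchimedean field $k$, and let $e \in \mathcal{A}(1)$ be an idempotent whose image $\bar{e}$ in $\overline{\mathcal{A}}$ is central. Then $e$ is central in $\mathcal{A}$. -/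
/-- If an idempotent `e` in the unit ball of a Banach algebra with `‖𝒜‖ ⊆ |k|` has central
reduction (i.e. `‖ea - ae‖ < 1` for all `a` in the unit ball), then `e` is central in `𝒜`. -/
theorem central_of_central_reduction {k A : Type*} [NontriviallyNormedField k]
    [CompleteSpace k] [IsUltrametricDist k] [NormedRing A] [NormOneClass A]
    [IsUltrametricDist A] [CompleteSpace A] [NormedAlgebra k A]
    (hval : ∀ a : A, ∃ c : k, ‖a‖ = ‖c‖)
    (e : A) (he : ‖e‖ ≤ 1) (hid : e * e = e)
    (hc : ∀ a : A, ‖a‖ ≤ 1 → ‖e * a - a * e‖ < 1) :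
    ∀ a : A, e * a = a * e := by
  -- Key lemma: if ‖x‖ ≤ ‖e*x - x*e‖ then x = 0.
  have key : ∀ x : A, ‖x‖ ≤ ‖e * x - x * e‖ → x = 0 := by
    intro x hx
    by_contra hx0
    obtain ⟨c, hcx⟩ := hval x
    have hc0 : c ≠ 0 := by
      intro h
      apply hx0
      rw [← norm_eq_zero, hcx, h, norm_zero]
    set y : A := c⁻¹ • x with hy
    have hny : ‖y‖ = 1 := by
      rw [hy, norm_smul, norm_inv, ← hcx,
        inv_mul_cancel₀ (by simpa [hcx] using (norm_ne_zero_iff.mpr hx0))]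
    have hcomm : e * y - y * e = c⁻¹ • (e * x - x * e) := by
      rw [hy, mul_smul_comm, smul_mul_assoc, smul_sub]
    have hge : (1 : ℝ) ≤ ‖e * y - y * e‖ := by
      rw [hcomm, norm_smul, norm_inv, ← hcx]
      calc (1 : ℝ) = ‖x‖⁻¹ * ‖x‖ := by
            rw [inv_mul_cancel₀ (norm_ne_zero_iff.mpr hx0)]
        _ ≤ ‖x‖⁻¹ * ‖e * x - x * e‖ := by
            apply mul_le_mul_of_nonneg_left hx
            positivity
    exact absurd (hc y (le_of_eq hny)) (not_lt.mpr hge)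
  intro a
  have f1 : e * (e * a) = e * a := by rw [← mul_assoc, hid]
  have f2 : e * (e * a * e) = e * a * e := by rw [← mul_assoc, ← mul_assoc, hid]
  have f3 : e * a * e * e = e * a * e := by rw [mul_assoc, hid]
  have f4 : a * e * e = a * e := by rw [mul_assoc, hid]
  have f5 : e * (a * e) = e * a * e := by rw [← mul_assoc]
  have h1 : e * a = e * a * e := by
    refine sub_eq_zero.mp (key (e * a - e * a * e) (le_of_eq ?_))
    rw [mul_sub, sub_mul, f1, f2, f3]
    abel_nf
  have h2 : a * e = e * a * e := by
    refine sub_eq_zero.mp (key (a * e - e * a * e) (le_of_eq ?_))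
    rw [mul_sub, sub_mul, f2, f3, f4, f5]
    rw [show e*a*e - e*a*e - (a*e - e*a*e) = -(a*e - e*a*e) by abel, norm_neg]
  rw [h1, h2]
end

section
/- Let $k$ be a local field and $\mathcal{A}$ a Banach $k$-algebra with $\|\mathcal{A}\| = |k|$ such that $\overline{\mathcal{A}}$ is a finite dimensional simple $\bar{k}$-algebra. Then for every nonzero cyclic left $\mathcal{A}$-module $M$, the associated ring homomorphism $\rho_M : \mathcal{A} \to \mathrm{End}_k(M)$ is injective; i.e., $\mathcal{A}$ acts faithfully on every nonzero cyclic left module. -/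
instance instSubtypeUltrametric {α : Type*} [PseudoMetricSpace α] [IsUltrametricDist α]
    {p : α → Prop} : IsUltrametricDist (Subtype p) :=
  ⟨fun x y z => IsUltrametricDist.dist_triangle_max x.1 y.1 z.1⟩

/-- The closed unit ball of an ultrametric normed ring, as a subring. -/
def unitBall (A : Type*) [NormedRing A] [NormOneClass A] [IsUltrametricDist A] : Subring A where
  carrier := {a | ‖a‖ ≤ 1}
  mul_mem' {a b} ha hb := le_trans (norm_mul_le a b) (mul_le_one₀ ha (norm_nonneg b) hb)
  one_mem' := le_of_eq norm_one
  add_mem' {a b} ha hb := le_trans (IsUltrametricDist.norm_add_le_max a b) (max_le ha hb)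
  zero_mem' := by simp
  neg_mem' {a} ha := by simpa using ha

/-- The congruence relation on the unit ball identifying elements whose difference has
norm `< 1`. -/
def redCon (A : Type*) [NormedRing A] [NormOneClass A] [IsUltrametricDist A] :
    RingCon (unitBall A) where
  r a b := ‖(a : A) - (b : A)‖ < 1
  iseqv := by
    refine ⟨fun a => by simp, fun {a b} h => ?_, fun {a b c} h1 h2 => ?_⟩
    · rwa [norm_sub_rev]
    · have : (a : A) - c = ((a : A) - b) + ((b : A) - c) := by abel
      rw [this]
      exact lt_of_le_of_lt (IsUltrametricDist.norm_add_le_max _ _) (max_lt h1 h2)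
  mul' {w x y z} h1 h2 := by
    have key : ((w * y : unitBall A) : A) - ((x * z : unitBall A) : A)
        = (w : A) * ((y : A) - (z : A)) + ((w : A) - (x : A)) * (z : A) := by
      push_cast; rw [mul_sub, sub_mul]; abel
    show ‖((w * y : unitBall A) : A) - ((x * z : unitBall A) : A)‖ < 1
    rw [key]
    refine lt_of_le_of_lt (IsUltrametricDist.norm_add_le_max _ _) (max_lt ?_ ?_)
    · exact lt_of_le_of_lt (norm_mul_le _ _)
        (lt_of_le_of_lt (mul_le_of_le_one_left (norm_nonneg _) w.2) h2)
    · exact lt_of_le_of_lt (norm_mul_le _ _)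
        (lt_of_le_of_lt (mul_le_of_le_one_right (norm_nonneg _) z.2) h1)
  add' {w x y z} h1 h2 := by
    have key : ((w + y : unitBall A) : A) - ((x + z : unitBall A) : A)
        = ((w : A) - (x : A)) + ((y : A) - (z : A)) := by push_cast; abel
    show ‖((w + y : unitBall A) : A) - ((x + z : unitBall A) : A)‖ < 1
    rw [key]
    exact lt_of_le_of_lt (IsUltrametricDist.norm_add_le_max _ _) (max_lt h1 h2)

/-- The residue ring `𝒜(1)/𝒜(1-)` of an ultrametric normed ring. -/
abbrev Red (A : Type*) [NormedRing A] [NormOneClass A] [IsUltrametricDist A] : Type _ :=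
  (redCon A).Quotient


/-- Let `k` be a local field and `𝒜` a Banach `k`-algebra with `‖𝒜‖ = |k|` whose residue
algebra `𝒜(1)/𝒜(1-)` is a finite dimensional simple ring. Then `𝒜` acts faithfully on
every nonzero cyclic left module `𝒜/I`. -/
theorem faithful_on_cyclic_modules {k A : Type*} [NontriviallyNormedField k] [CompleteSpace k]
    [IsUltrametricDist k] [ProperSpace k]
    (ϖ : k) (hϖ0 : 0 < ‖ϖ‖) (hϖ1 : ‖ϖ‖ < 1)
    (hdisc : ∀ x : k, x ≠ 0 → ∃ n : ℤ, ‖x‖ = ‖ϖ‖ ^ n)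
    [NormedRing A] [NormOneClass A] [IsUltrametricDist A] [CompleteSpace A]
    [NormedAlgebra k A]
    (hval : ∀ a : A, ∃ c : k, ‖a‖ = ‖c‖) (hval' : ∀ c : k, ∃ a : A, ‖a‖ = ‖c‖)
    (hfin : Finite (Red A)) (hsimple : IsSimpleRing (Red A)) :
    ∀ I : Ideal A, I ≠ ⊤ → ∀ a : A, (∀ x : A ⧸ I, a • x = 0) → a = 0 := by
  intro I hI a ha
  by_contra ha0
  -- scale a to norm 1
  obtain ⟨c, hc⟩ := hval a
  have hc0 : c ≠ 0 := by
    intro h; apply ha0; rw [h, norm_zero] at hc; exact norm_eq_zero.mp hc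
  set a' : A := c⁻¹ • a with ha'def
  have hna' : ‖a'‖ = 1 := by
    rw [ha'def, norm_smul, norm_inv, hc]
    exact inv_mul_cancel₀ (norm_ne_zero_iff.mpr hc0)
  have ha'ball : a' ∈ unitBall A := le_of_eq hna'
  have ha'ann : ∀ x : A ⧸ I, a' • x = 0 := by
    intro x
    rw [ha'def, Algebra.smul_def, mul_smul, ha x, smul_zero]
  -- the annihilator set inside the unit ball, pushed to the residue ring
  set S : Set (Red A) := {z | ∃ b : unitBall A, (∀ x : A ⧸ I, (b : A) • x = 0) ∧ (b : Red A) = z}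
    with hS
  have hrep : ∀ z : Red A, ∃ b : unitBall A, (b : Red A) = z := fun z => Quot.exists_rep z
  let T : TwoSidedIdeal (Red A) := TwoSidedIdeal.mk' S
    ⟨0, fun x => by simp, by simp⟩
    (by
      rintro _ _ ⟨b1, hb1, rfl⟩ ⟨b2, hb2, rfl⟩
      exact ⟨b1 + b2, fun x => by
        show ((b1 : A) + (b2 : A)) • x = 0
        rw [add_smul, hb1, hb2, add_zero], rfl⟩)
    (by
      rintro _ ⟨b, hb, rfl⟩
      exact ⟨-b, fun x => by
        show (-(b : A)) • x = 0
        rw [neg_smul, hb, neg_zero], rfl⟩)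
    (by
      rintro x _ ⟨b, hb, rfl⟩
      obtain ⟨u, rfl⟩ := hrep x
      exact ⟨u * b, fun m => by
        show ((u : A) * (b : A)) • m = 0
        rw [mul_smul, hb, smul_zero], rfl⟩)
    (by
      rintro _ y ⟨b, hb, rfl⟩
      obtain ⟨u, rfl⟩ := hrep y
      exact ⟨b * u, fun m => by
        show ((b : A) * (u : A)) • m = 0
        rw [mul_smul, hb], rfl⟩)
  have hmemT : ∀ z, z ∈ T ↔ z ∈ S := fun z => TwoSidedIdeal.mem_mk' _ _ _ _ _ _ z
  -- T is nonzero since a' reduces to a nonzero element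
  have hTne : T ≠ ⊥ := by
    intro hbot
    have : ((⟨a', ha'ball⟩ : unitBall A) : Red A) ∈ T := (hmemT _).mpr ⟨⟨a', ha'ball⟩, ha'ann, rfl⟩
    rw [hbot, TwoSidedIdeal.mem_bot] at this
    have h0 : ((⟨a', ha'ball⟩ : unitBall A) : Red A) = (((0 : unitBall A)) : Red A) := by
      simpa using this
    rw [RingCon.eq] at h0
    have : ‖a' - (0 : A)‖ < 1 := h0
    rw [sub_zero, hna'] at this
    exact lt_irrefl _ this
  have hTtop : T = ⊤ := (hsimple.simple.eq_bot_or_eq_top T).resolve_left hTne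
  -- so 1 belongs to the reduction of the annihilator
  have h1 : (1 : Red A) ∈ S := (hmemT 1).mp (hTtop ▸ trivial)
  obtain ⟨b, hbann, hb1⟩ := h1
  -- b is close to 1, hence a unit
  have hrel : ‖(b : A) - ((1 : unitBall A) : A)‖ < 1 :=
    (RingCon.eq (redCon A)).mp (hb1.trans (RingCon.coe_one _).symm)
  have hnear : ‖(1 : A) - (b : A)‖ < 1 := by rw [norm_sub_rev] at hrel; simpa using hrel
  let u : Aˣ := Units.oneSub ((1 : A) - (b : A)) hnear
  have huval : (u : A) = (b : A) := sub_sub_cancel 1 (b : A)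
  -- then 1 annihilates A ⧸ I, contradiction with I ≠ ⊤
  have hone : ∀ x : A ⧸ I, (1 : A) • x = 0 := by
    intro x
    have : (((u⁻¹ : Aˣ) : A) * (u : A)) • x = 0 := by
      rw [mul_smul, huval, hbann, smul_zero]
    rwa [u.inv_mul] at this
  apply hI
  rw [Ideal.eq_top_iff_one]
  have := hone (Submodule.Quotient.mk (1 : A))
  rw [one_smul] at this
  exact (Submodule.Quotient.mk_eq_zero I).mp this
end

section
/- Let $k$ be a local field and $\mathcal{A}$ a Banach $k$-algebra with $\|\mathcal{A}\| = |k|$. If the residue algebra $\overline{\mathcal{A}}$ is a finite dimensional semisimple $\bar{k}$-algebra, then the underlying $k$-algebra of $\mathcal{A}$ is a finite dimensional semisimple $k$-algebra. -/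
/-- Theorem (semisimplicity): let `k` be a local field and `𝒜` a Banach `k`-algebra with
`‖𝒜‖ = |k|`. If the residue algebra `𝒜(1)/𝒜(1-)` is a finite dimensional (equivalently,
since the residue field of `k` is finite, a finite) semisimple ring, then `𝒜` is a finite
dimensional semisimple `k`-algebra. -/
theorem semisimple_of_semisimple_reduction {k A : Type*} [NontriviallyNormedField k]
    [CompleteSpace k] [IsUltrametricDist k] [ProperSpace k]
    (ϖ : k) (hϖ0 : 0 < ‖ϖ‖) (hϖ1 : ‖ϖ‖ < 1)
    (hdisc : ∀ x : k, x ≠ 0 → ∃ n : ℤ, ‖x‖ = ‖ϖ‖ ^ n)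
    [NormedRing A] [NormOneClass A] [IsUltrametricDist A] [CompleteSpace A]
    [NormedAlgebra k A]
    (hval : ∀ a : A, ∃ c : k, ‖a‖ = ‖c‖) (hval' : ∀ c : k, ∃ a : A, ‖a‖ = ‖c‖)
    (hfin : Finite (Red A)) (hss : IsSemisimpleRing (Red A)) :
    IsSemisimpleRing A ∧ FiniteDimensional k A := by
  classical
  haveI := hfin
  haveI := hss
  have hϖne : ϖ ≠ 0 := norm_pos_iff.mp hϖ0
  have hone : (1 : A) ≠ 0 := by
    intro h
    have h1 : ‖(1 : A)‖ = 1 := norm_one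
    rw [h, norm_zero] at h1
    exact zero_ne_one h1
  haveI : Nontrivial A := nontrivial_of_ne 1 0 hone
  -- Step A : small norms are ≤ ‖ϖ‖
  have key_le : ∀ a : A, ‖a‖ < 1 → ‖a‖ ≤ ‖ϖ‖ := by
    intro a ha
    by_cases h0 : a = 0
    · rw [h0, norm_zero]; exact hϖ0.le
    obtain ⟨c, hc⟩ := hval a
    have hc0 : c ≠ 0 := by
      intro h; rw [h, norm_zero] at hc; exact h0 (norm_eq_zero.mp hc)
    obtain ⟨n, hn⟩ := hdisc c hc0
    have hlt : ‖ϖ‖ ^ n < 1 := by rw [← hn, ← hc]; exact ha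
    have hn1 : (1 : ℤ) ≤ n := by
      by_contra h
      push_neg at h
      have hn0 : n ≤ 0 := by omega
      have := zpow_le_zpow_right_of_le_one₀ hϖ0 hϖ1.le hn0
      rw [zpow_zero] at this
      exact absurd hlt (not_lt.mpr this)
    calc ‖a‖ = ‖ϖ‖ ^ n := by rw [hc, hn]
      _ ≤ ‖ϖ‖ ^ (1 : ℤ) := zpow_le_zpow_right_of_le_one₀ hϖ0 hϖ1.le hn1
      _ = ‖ϖ‖ := zpow_one _
  -- Step B : finite dimensionality
  let rep : Red A → A := fun q => ((Quotient.out q : unitBall A) : A)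
  have hrep_close : ∀ w : unitBall A, ‖(w : A) - rep ((w : Red A))‖ < 1 := by
    intro w
    have hq : ((Quotient.out ((w : Red A)) : unitBall A) : Red A) = (w : Red A) :=
      Quotient.out_eq' _
    have hrel := (RingCon.eq (redCon A)).mp hq
    have : ‖((Quotient.out ((w : Red A)) : unitBall A) : A) - (w : A)‖ < 1 := hrel
    rwa [norm_sub_rev] at this
  set V : Submodule k A := Submodule.span k (Set.range rep) with hV
  haveI hVfd : FiniteDimensional k V :=
    FiniteDimensional.span_of_finite k (Set.finite_range rep)
  have hVclosed : IsClosed (V : Set A) := V.closed_of_finiteDimensional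
  have approx : ∀ n : ℕ, ∀ a : A, ‖a‖ ≤ 1 → ∃ v ∈ V, ‖a - v‖ ≤ ‖ϖ‖ ^ n := by
    intro n
    induction n with
    | zero => intro a ha; exact ⟨0, V.zero_mem, by simpa using ha⟩
    | succ n ih =>
      intro a ha
      set w : unitBall A := ⟨a, ha⟩ with hw
      set r : A := rep ((w : Red A)) with hr
      have hrV : r ∈ V := Submodule.subset_span (Set.mem_range_self _)
      have hsub : ‖a - r‖ < 1 := hrep_close w
      have hsub' : ‖a - r‖ ≤ ‖ϖ‖ := key_le _ hsub
      set b : A := ϖ⁻¹ • (a - r) with hb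
      have hbnorm : ‖b‖ ≤ 1 := by
        rw [hb, norm_smul, norm_inv]
        calc ‖ϖ‖⁻¹ * ‖a - r‖ ≤ ‖ϖ‖⁻¹ * ‖ϖ‖ :=
              mul_le_mul_of_nonneg_left hsub' (by positivity)
          _ = 1 := inv_mul_cancel₀ hϖ0.ne'
      obtain ⟨v', hv'V, hv'⟩ := ih b hbnorm
      refine ⟨r + ϖ • v', V.add_mem hrV (V.smul_mem ϖ hv'V), ?_⟩
      have hkey : a - (r + ϖ • v') = ϖ • (b - v') := by
        rw [smul_sub, hb, smul_inv_smul₀ hϖne, sub_add_eq_sub_sub]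
      rw [hkey, norm_smul]
      calc ‖ϖ‖ * ‖b - v'‖ ≤ ‖ϖ‖ * ‖ϖ‖ ^ n := mul_le_mul_of_nonneg_left hv' hϖ0.le
        _ = ‖ϖ‖ ^ (n + 1) := (pow_succ' _ _).symm
  have hball : ∀ a : A, ‖a‖ ≤ 1 → a ∈ V := by
    intro a ha
    have : a ∈ closure (V : Set A) := by
      rw [Metric.mem_closure_iff]
      intro ε hε
      obtain ⟨n, hn⟩ := exists_pow_lt_of_lt_one hε hϖ1
      obtain ⟨v, hvV, hv⟩ := approx n a ha
      exact ⟨v, hvV, by rw [dist_eq_norm]; exact lt_of_le_of_lt hv hn⟩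
    exact hVclosed.closure_subset this
  have hVtop : V = ⊤ := by
    rw [Submodule.eq_top_iff']
    intro a
    by_cases h0 : a = 0
    · rw [h0]; exact V.zero_mem
    obtain ⟨c, hc⟩ := hval a
    have ha0 : ‖a‖ ≠ 0 := norm_ne_zero_iff.mpr h0
    have hc0 : c ≠ 0 := by intro h; rw [h, norm_zero] at hc; exact ha0 hc
    have h1 : ‖c⁻¹ • a‖ ≤ 1 := by
      rw [norm_smul, norm_inv, ← hc, inv_mul_cancel₀ ha0]
    have := hball _ h1
    have h2 : a = c • (c⁻¹ • a) := (smul_inv_smul₀ hc0 a).symm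
    rw [h2]
    exact V.smul_mem c this
  haveI hfd : FiniteDimensional k A := by
    haveI htop : FiniteDimensional k (⊤ : Submodule k A) := hVtop ▸ hVfd
    exact (Submodule.topEquiv (R := k) (M := A)).finiteDimensional
  -- Step C : A is Artinian over itself
  haveI : IsArtinian k A := inferInstance
  haveI hart : IsArtinian A A := isArtinian_of_tower k inferInstance
  -- Step D : the (left) Jacobson radical
  set Jac : Ideal A := sInf {I : Ideal A | I.IsMaximal} with hJac
  have left_inv : ∀ x ∈ Jac, ∀ y : A, ∃ z : A, z * (1 - y * x) = 1 := by
    intro x hx y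
    by_contra hno
    push_neg at hno
    set I : Ideal A := Submodule.span A {1 - y * x} with hI
    have hIne : I ≠ ⊤ := by
      intro h
      have h1 : (1 : A) ∈ I := h ▸ Submodule.mem_top
      rw [hI, Submodule.mem_span_singleton] at h1
      obtain ⟨z, hz⟩ := h1
      exact hno z (by rw [← smul_eq_mul]; exact hz)
    obtain ⟨m, hm, hIm⟩ := Ideal.exists_le_maximal I hIne
    have hxm : x ∈ m := (sInf_le (show m ∈ {I : Ideal A | I.IsMaximal} from hm)) hx
    have hyx : y * x ∈ m := by rw [← smul_eq_mul]; exact m.smul_mem y hxm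
    have hsubm : 1 - y * x ∈ m := hIm (Submodule.subset_span rfl)
    have h1m : (1 : A) ∈ m := by
      have := m.add_mem hsubm hyx
      rwa [sub_add_cancel] at this
    exact hm.ne_top ((Ideal.eq_top_iff_one m).mpr h1m)
  have nilJ : ∀ x ∈ Jac, ∃ n : ℕ, x ^ (n + 1) = 0 := by
    intro x hx
    obtain ⟨N, ⟨n, hn⟩, hmin⟩ := IsArtinian.set_has_minimal
      (Set.range fun n : ℕ => (Submodule.span A {x ^ (n + 1)} : Submodule A A))
      ⟨_, ⟨0, rfl⟩⟩
    have hle : (Submodule.span A {x ^ (n + 2)} : Submodule A A)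
        ≤ Submodule.span A {x ^ (n + 1)} := by
      rw [Submodule.span_le, Set.singleton_subset_iff]
      rw [SetLike.mem_coe, Submodule.mem_span_singleton]
      exact ⟨x, by rw [smul_eq_mul, ← pow_succ']⟩
    have heq : (Submodule.span A {x ^ (n + 2)} : Submodule A A)
        = Submodule.span A {x ^ (n + 1)} := by
      by_contra hne
      exact hmin _ ⟨n + 1, rfl⟩ (hn ▸ lt_of_le_of_ne hle hne)
    have hmem : x ^ (n + 1) ∈ (Submodule.span A {x ^ (n + 2)} : Submodule A A) := by
      rw [heq]; exact Submodule.mem_span_singleton_self _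
    rw [Submodule.mem_span_singleton] at hmem
    obtain ⟨a, ha⟩ := hmem
    rw [smul_eq_mul] at ha
    obtain ⟨z, hz⟩ := left_inv x hx a
    refine ⟨n, ?_⟩
    have hkill : (1 - a * x) * x ^ (n + 1) = 0 := by
      rw [sub_mul, one_mul, mul_assoc, ← pow_succ', ha, sub_self]
    calc x ^ (n + 1) = (z * (1 - a * x)) * x ^ (n + 1) := by rw [hz, one_mul]
      _ = z * ((1 - a * x) * x ^ (n + 1)) := mul_assoc _ _ _
      _ = 0 := by rw [hkill, mul_zero]
  -- Step E : the reduction of the radical is a nil ideal of the semisimple ring `Red A`,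
  -- hence zero; conclude the radical is zero.
  have hJbot : Jac = ⊥ := by
    rw [eq_bot_iff]
    intro x hx
    rw [Submodule.mem_bot]
    by_contra hx0
    obtain ⟨c, hc⟩ := hval x
    have hxnorm : ‖x‖ ≠ 0 := norm_ne_zero_iff.mpr hx0
    have hc0 : c ≠ 0 := by intro h; rw [h, norm_zero] at hc; exact hxnorm hc
    set x₀ : A := c⁻¹ • x with hx₀
    have hx₀J : x₀ ∈ Jac := by
      rw [hx₀, Algebra.smul_def, ← smul_eq_mul]
      exact Jac.smul_mem _ hx
    have hx₀n : ‖x₀‖ = 1 := by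
      rw [hx₀, norm_smul, norm_inv, ← hc, inv_mul_cancel₀ hxnorm]
    -- the image of `Jac ∩ unitBall` in `Red A`
    set Ibar : Ideal (Red A) :=
      { carrier := {z : Red A | ∃ w : unitBall A, (w : A) ∈ Jac ∧ (w : Red A) = z}
        zero_mem' := ⟨0, Jac.zero_mem, rfl⟩
        add_mem' := by
          rintro z₁ z₂ ⟨w₁, hw₁, rfl⟩ ⟨w₂, hw₂, rfl⟩
          exact ⟨w₁ + w₂, Jac.add_mem hw₁ hw₂, rfl⟩
        smul_mem' := by
          rintro c z ⟨w, hwJ, rfl⟩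
          obtain ⟨r, rfl⟩ := Quotient.exists_rep c
          refine ⟨r * w, ?_, rfl⟩
          rw [show ((r * w : unitBall A) : A) = (r : A) * (w : A) from rfl, ← smul_eq_mul]
          exact Jac.smul_mem _ hwJ } with hIbar
    have hnil : ∀ z ∈ Ibar, ∃ n : ℕ, z ^ (n + 1) = 0 := by
      rintro z ⟨w, hwJ, rfl⟩
      obtain ⟨n, hn⟩ := nilJ (w : A) hwJ
      refine ⟨n, ?_⟩
      have hw0 : w ^ (n + 1) = 0 := by
        ext
        rw [show ((w ^ (n + 1) : unitBall A) : A) = (w : A) ^ (n + 1) from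
          SubmonoidClass.coe_pow w (n + 1), hn]
        rfl
      rw [← RingCon.coe_pow, hw0, RingCon.coe_zero]
    obtain ⟨e, he_idem, he_span⟩ := IsSemisimpleRing.ideal_eq_span_idempotent Ibar
    have heI : e ∈ Ibar := he_span ▸ Submodule.mem_span_singleton_self e
    obtain ⟨n, hn⟩ := hnil e heI
    have he0 : e = 0 := by rw [← he_idem.pow_succ_eq n, hn]
    have hIbot : Ibar = ⊥ := by
      rw [he_span, he0]
      simp
    have hx₀mem : ((⟨x₀, hx₀n.le⟩ : unitBall A) : Red A) ∈ Ibar := ⟨⟨x₀, hx₀n.le⟩, hx₀J, rfl⟩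
    rw [hIbot, Submodule.mem_bot] at hx₀mem
    have hx₀rel : (redCon A) ⟨x₀, hx₀n.le⟩ 0 := by
      rw [← RingCon.eq]
      rw [hx₀mem, RingCon.coe_zero]
    have : ‖x₀ - ((0 : unitBall A) : A)‖ < 1 := hx₀rel
    rw [show ((0 : unitBall A) : A) = 0 from rfl, sub_zero, hx₀n] at this
    exact lt_irrefl _ this
  -- Step F : a finite family of maximal ideals with trivial intersection
  have hTne : (⊤ : Submodule A A) ∈
      {I : Submodule A A | ∃ s : Finset (Ideal A),
        (∀ J ∈ s, J.IsMaximal) ∧ I = s.inf id} := ⟨∅, by simp, by simp⟩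
  obtain ⟨m, ⟨s₀, hs₀max, rfl⟩, hmin⟩ := IsArtinian.set_has_minimal
    {I : Submodule A A | ∃ s : Finset (Ideal A), (∀ J ∈ s, J.IsMaximal) ∧ I = s.inf id}
    ⟨⊤, hTne⟩
  have hinf_bot : s₀.inf id = ⊥ := by
    have hle : s₀.inf id ≤ Jac := by
      rw [hJac]
      apply le_sInf
      intro I hImax
      by_contra hnle
      have hlt : (insert I s₀).inf id < s₀.inf id := by
        rw [Finset.inf_insert]
        refine lt_of_le_of_ne inf_le_right ?_
        intro h
        exact hnle (h ▸ (inf_le_left : id I ⊓ s₀.inf id ≤ I))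
      exact hmin _ ⟨insert I s₀, by
        intro J hJ
        rcases Finset.mem_insert.mp hJ with rfl | hJ
        · exact hImax
        · exact hs₀max J hJ, rfl⟩ hlt
    rw [hJbot] at hle
    exact le_bot_iff.mp hle
  -- Step G : embed `A` into a finite product of simple modules
  let f : A →ₗ[A] ((J : s₀) → A ⧸ (J : Ideal A)) :=
    LinearMap.pi (fun J : s₀ => (J : Ideal A).mkQ)
  have hker : LinearMap.ker f = ⊥ := by
    rw [LinearMap.ker_pi]
    have : (⨅ J : s₀, LinearMap.ker (J : Ideal A).mkQ) = ⨅ J : s₀, (J : Ideal A) := by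
      simp [Submodule.ker_mkQ]
    rw [this, ← hinf_bot, Finset.inf_eq_iInf, iInf_subtype]
    simp
  have hinj : Function.Injective f := LinearMap.ker_eq_bot.mp hker
  haveI hsimple : ∀ J : s₀, IsSimpleModule A (A ⧸ (J : Ideal A)) := fun J =>
    isSimpleModule_iff_isCoatom.mpr (Ideal.isMaximal_def.mp (hs₀max J J.2))
  haveI hMss : IsSemisimpleModule A ((J : s₀) → A ⧸ (J : Ideal A)) := by
    apply isSemisimpleModule_of_isSemisimpleModule_submodule'
      (p := fun J : s₀ => LinearMap.range (LinearMap.single A (fun J : s₀ => A ⧸ (J : Ideal A)) J))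
    · intro J
      haveI := hsimple J
      exact IsSemisimpleModule.congr
        (LinearEquiv.ofInjective _ (by rw [LinearMap.coe_single]; exact Pi.single_injective J)).symm
    · have := Submodule.iSup_map_single (R := A) (φ := fun J : s₀ => A ⧸ (J : Ideal A))
        (p := fun _ => ⊤)
      simpa [Submodule.map_top, Submodule.pi_top] using this
  haveI : IsSemisimpleModule A (LinearMap.range f) := inferInstance
  exact ⟨IsSemisimpleModule.congr (M := ↥(LinearMap.range f)) (LinearEquiv.ofInjective f hinj), hfd⟩
end

section
/- Let $k$ be a local field, $\mathcal{M}$ a topological monoid, and $(V, \rho)$ a finite dimensional strictly Cartesian unitary representation of $\mathcal{M}$ over $k$. Let $\mathcal{A}$ be the closure of the image of $k[\mathcal{M}]$ in the Banach algebra $\mathrm{B}_k(V)$ of continuous endomorphisms with the operator norm. If $\overline{\mathcal{A}} = \mathcal{A}(1)/\mathcal{A}(1-)$ is a semisimple $\bar{k}$-algebra, then $V$ is a semisimple representation of $\mathcal{M}$, i.e. $V$ decomposes as a direct sum of irreducible subrepresentations. -/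
section Rep

variable {k V : Type*} [NontriviallyNormedField k] [CompleteSpace k] [IsUltrametricDist k]
  [NormedAddCommGroup V] [NormedSpace k V] [IsUltrametricDist V] [Nontrivial V]

instance instUltrametricCLM : IsUltrametricDist (V →L[k] V) := by
  apply IsUltrametricDist.isUltrametricDist_of_isNonarchimedean_norm
  intro f g
  refine ContinuousLinearMap.opNorm_le_bound _ (le_max_of_le_left (norm_nonneg f)) fun x => ?_
  calc ‖(f + g) x‖ = ‖f x + g x‖ := rfl
    _ ≤ max ‖f x‖ ‖g x‖ := IsUltrametricDist.norm_add_le_max _ _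
    _ ≤ max (‖f‖ * ‖x‖) (‖g‖ * ‖x‖) := max_le_max (f.le_opNorm x) (g.le_opNorm x)
    _ = max ‖f‖ ‖g‖ * ‖x‖ := (max_mul_of_nonneg _ _ (norm_nonneg x)).symm

noncomputable instance instNormOneClassSubalgebraCLM (S : Subalgebra k (V →L[k] V)) :
    NormOneClass S :=
  ⟨show ‖(1 : V →L[k] V)‖ = 1 from norm_one⟩

/-- The operator algebra of a unitary representation `ρ`: the closure of the image of
`k[ℳ]`, i.e. the topological closure of the `k`-subalgebra generated by the image of the
monoid `ℳ` in `B_k(V)`. -/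
noncomputable def opAlg {M : Type*} [Monoid M] (ρ : M →* (V →L[k] V)) :
    Subalgebra k (V →L[k] V) :=
  (Algebra.adjoin k (Set.range ρ)).topologicalClosure

end Rep


section AuxRing

/-- In any ring, `1 - z` is left invertible when `z` is in the Jacobson radical. -/
theorem aux_exists_left_inv {R : Type*} [Ring R] {z : R}
    (hz : z ∈ Ideal.jacobson (⊥ : Ideal R)) : ∃ u : R, u * (1 - z) = 1 := by
  by_contra h
  push_neg at h
  have hne : Ideal.span {(1 : R) - z} ≠ ⊤ := by
    intro htop
    have h1 : (1 : R) ∈ Ideal.span {(1 : R) - z} := htop ▸ Submodule.mem_top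
    obtain ⟨u, hu⟩ := Submodule.mem_span_singleton.mp h1
    exact h u (by simpa [smul_eq_mul] using hu)
  obtain ⟨m, hm, hle⟩ := Ideal.exists_le_maximal _ hne
  have hzm : z ∈ m := by
    rw [Ideal.jacobson] at hz
    exact Submodule.mem_sInf.mp hz m ⟨bot_le, hm⟩
  have h1m : (1 : R) - z ∈ m := hle (Ideal.subset_span rfl)
  have : (1 : R) ∈ m := by simpa using add_mem h1m hzm
  exact hm.ne_top ((Ideal.eq_top_iff_one m).mpr this)

/-- In an Artinian ring, every element of the Jacobson radical is nilpotent. -/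
theorem aux_nilpotent_of_mem_jacobson {R : Type*} [Ring R] [IsArtinianRing R] {y : R}
    (hy : y ∈ Ideal.jacobson (⊥ : Ideal R)) : IsNilpotent y := by
  have hmono : ∀ i : ℕ, Ideal.span {y ^ (i + 1)} ≤ Ideal.span {y ^ i} := by
    intro i
    rw [Ideal.span_le, Set.singleton_subset_iff]
    have : y ^ (i + 1) = y • y ^ i := by rw [smul_eq_mul, pow_succ']
    rw [this]
    exact Submodule.smul_mem _ y (Submodule.mem_span_singleton_self _)
  let f : ℕ →o (Ideal R)ᵒᵈ :=
    ⟨fun i => Ideal.span {y ^ i}, monotone_nat_of_le_succ fun i => hmono i⟩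
  obtain ⟨n, hn⟩ := IsArtinian.monotone_stabilizes f
  have heq : Ideal.span {y ^ n} = Ideal.span {y ^ (n + 1)} := hn (n + 1) (Nat.le_succ n)
  have hYn : y ^ n ∈ Ideal.span {y ^ (n + 1)} :=
    heq ▸ Submodule.mem_span_singleton_self _
  obtain ⟨a, ha⟩ := Submodule.mem_span_singleton.mp hYn
  rw [smul_eq_mul] at ha
  have key : (1 - a * y) * y ^ n = 0 := by
    have : a * y ^ (n + 1) = (a * y) * y ^ n := by rw [pow_succ', ← mul_assoc]
    rw [sub_mul, one_mul, ← this, ha, sub_self]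
  obtain ⟨u, hu⟩ := aux_exists_left_inv (Ideal.mul_mem_left _ a hy)
  refine ⟨n, ?_⟩
  calc y ^ n = (u * (1 - a * y)) * y ^ n := by rw [hu, one_mul]
    _ = u * ((1 - a * y) * y ^ n) := by rw [mul_assoc]
    _ = 0 := by rw [key, mul_zero]

/-- A finite product of semisimple modules is semisimple. -/
theorem aux_pi_semisimple {R ι : Type*} [Ring R] [Finite ι] (φ : ι → Type*)
    [∀ i, AddCommGroup (φ i)] [∀ i, Module R (φ i)] [∀ i, IsSemisimpleModule R (φ i)] :
    IsSemisimpleModule R (∀ i, φ i) := by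
  classical
  refine isSemisimpleModule_of_isSemisimpleModule_submodule'
    (p := fun i => LinearMap.range (LinearMap.single R φ i)) (fun i => ?_)
    (LinearMap.iSup_range_single R φ)
  have hinj : Function.Injective ⇑(LinearMap.single R φ i) := Pi.single_injective (M := φ) i
  exact IsSemisimpleModule.congr (LinearEquiv.ofInjective _ hinj).symm

/-- An Artinian ring with trivial Jacobson radical is semisimple. -/
theorem aux_isSemisimpleRing {R : Type*} [Ring R] [IsArtinianRing R]
    (hJ : Ideal.jacobson (⊥ : Ideal R) = ⊥) : IsSemisimpleRing R := by
  classical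
  set 𝒮 : Set (Ideal R) := {I | ∃ t : Finset (Ideal R), (∀ m ∈ t, m.IsMaximal) ∧ I = t.inf id}
    with h𝒮
  have htop : (⊤ : Ideal R) ∈ 𝒮 := ⟨∅, by simp, by simp⟩
  have hwf : WellFounded ((· < ·) : Ideal R → Ideal R → Prop) := IsWellFounded.wf
  obtain ⟨I₀, hI₀, hmin⟩ := hwf.has_min 𝒮 ⟨⊤, htop⟩
  obtain ⟨t, ht, hIt⟩ := hI₀
  have hle : ∀ m : Ideal R, m.IsMaximal → I₀ ≤ m := by
    intro m hm
    have hmem : I₀ ⊓ m ∈ 𝒮 := by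
      refine ⟨insert m t, ?_, ?_⟩
      · intro p hp
        rcases Finset.mem_insert.mp hp with rfl | hp
        · exact hm
        · exact ht p hp
      · rw [Finset.inf_insert, ← hIt, id]
        rw [inf_comm]
    have hnotlt := hmin _ hmem
    have heq : I₀ ⊓ m = I₀ := (lt_or_eq_of_le inf_le_left).resolve_left hnotlt
    exact inf_eq_left.mp heq
  have hI₀bot : I₀ = ⊥ := by
    have h1 : I₀ ≤ Ideal.jacobson (⊥ : Ideal R) := by
      rw [Ideal.jacobson]
      exact le_sInf fun m hm => hle m hm.2
    rw [hJ] at h1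
    exact le_bot_iff.mp h1
  -- the natural map into the product of quotients
  haveI hsimple : ∀ i : t, IsSimpleModule R (R ⧸ (i : Ideal R)) := by
    intro i
    rw [isSimpleModule_iff_isCoatom]
    exact Ideal.isMaximal_def.mp (ht i i.2)
  haveI : IsSemisimpleModule R (∀ i : t, R ⧸ (i : Ideal R)) :=
    aux_pi_semisimple _
  let f : R →ₗ[R] ∀ i : t, R ⧸ (i : Ideal R) := LinearMap.pi fun i => (i : Ideal R).mkQ
  have hker : LinearMap.ker f = ⊥ := by
    rw [LinearMap.ker_pi]
    have : ∀ i : t, LinearMap.ker (i : Ideal R).mkQ = (i : Ideal R) := fun i =>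
      Submodule.ker_mkQ _
    calc (⨅ i : t, LinearMap.ker (i : Ideal R).mkQ) = ⨅ i : t, (i : Ideal R) := by
          exact iInf_congr this
      _ = t.inf id := by rw [Finset.inf_eq_iInf, iInf_subtype]; rfl
      _ = ⊥ := by rw [← hIt, hI₀bot]
  have hinj : Function.Injective f := LinearMap.ker_eq_bot.mp hker
  have : IsSemisimpleModule R R :=
    IsSemisimpleModule.congr (M := LinearMap.range f) (LinearEquiv.ofInjective f hinj)
  exact this

/-- Powers pass through the quotient by a ring congruence. -/
theorem aux_ringcon_coe_pow {R : Type*} [Ring R] (c : RingCon R) (a : R) (n : ℕ) :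
    ((a ^ n : R) : c.Quotient) = (a : c.Quotient) ^ n :=
  map_pow c.mk' a n

end AuxRing

section AuxNorm

/-- The operator norm of a nonzero operator on a strictly Cartesian space over a discretely
valued field lies in the value group. -/
theorem aux_opNorm_mem_zpowers {k V : Type*} [NontriviallyNormedField k]
    [NormedAddCommGroup V] [NormedSpace k V]
    {ϖ : k} (hϖ0 : 0 < ‖ϖ‖) (hϖ1 : ‖ϖ‖ < 1)
    (hdisc : ∀ x : k, x ≠ 0 → ∃ n : ℤ, ‖x‖ = ‖ϖ‖ ^ n)
    (hcart : ∀ v : V, ∃ c : k, ‖v‖ = ‖c‖)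
    {x : V →L[k] V} (hx : x ≠ 0) : ∃ n : ℤ, ‖x‖ = ‖ϖ‖ ^ n := by
  have hr : 0 < ‖x‖ := by
    rcases (norm_nonneg x).lt_or_eq with h | h
    · exact h
    · exact absurd (x.opNorm_zero_iff.mp h.symm) hx
  have hinv : 1 < ‖ϖ‖⁻¹ := (one_lt_inv₀ hϖ0).mpr hϖ1
  obtain ⟨n, hn1, hn2⟩ := exists_mem_Ioc_zpow hr hinv
  set m : ℤ := -(n + 1) with hm
  have key1 : ‖ϖ‖ ^ (m + 1) < ‖x‖ := by
    have h1 : ‖ϖ‖⁻¹ ^ n = ‖ϖ‖ ^ (m + 1) := by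
      rw [inv_zpow, ← zpow_neg]
      congr 1
      omega
    rw [← h1]
    exact hn1
  have key2 : ‖x‖ ≤ ‖ϖ‖ ^ m := by
    have h1 : ‖ϖ‖⁻¹ ^ (n + 1) = ‖ϖ‖ ^ m := by
      rw [inv_zpow, ← zpow_neg]
    rw [← h1]
    exact hn2
  refine ⟨m, le_antisymm key2 ?_⟩
  by_contra hlt
  push_neg at hlt
  have hb : ∀ v : V, ‖x v‖ ≤ ‖ϖ‖ ^ (m + 1) * ‖v‖ := by
    intro v
    by_cases hv : x v = 0
    · rw [hv, norm_zero]
      positivity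
    · have hvne : v ≠ 0 := fun h => hv (by rw [h, map_zero])
      have hvpos : 0 < ‖v‖ := norm_pos_iff.mpr hvne
      obtain ⟨c₁, hc₁⟩ := hcart (x v)
      obtain ⟨c₂, hc₂⟩ := hcart v
      have hc₁0 : c₁ ≠ 0 := by
        intro h
        exact hv (norm_eq_zero.mp (by rw [hc₁, h, norm_zero]))
      have hc₂0 : c₂ ≠ 0 := by
        intro h
        exact hvne (norm_eq_zero.mp (by rw [hc₂, h, norm_zero]))
      obtain ⟨a, ha⟩ := hdisc c₁ hc₁0
      obtain ⟨b, hb'⟩ := hdisc c₂ hc₂0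
      have hxva : ‖x v‖ = ‖ϖ‖ ^ a := by rw [hc₁, ha]
      have hvb : ‖v‖ = ‖ϖ‖ ^ b := by rw [hc₂, hb']
      have hle : ‖ϖ‖ ^ a < ‖ϖ‖ ^ (m + b) := by
        calc ‖ϖ‖ ^ a = ‖x v‖ := hxva.symm
          _ ≤ ‖x‖ * ‖v‖ := x.le_opNorm v
          _ < ‖ϖ‖ ^ m * ‖v‖ := mul_lt_mul_of_pos_right hlt hvpos
          _ = ‖ϖ‖ ^ (m + b) := by rw [hvb, ← zpow_add₀ (ne_of_gt hϖ0)]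
      have hge : m + b + 1 ≤ a := by
        have := (zpow_lt_zpow_iff_right_of_lt_one₀ hϖ0 hϖ1).mp hle
        omega
      calc ‖x v‖ = ‖ϖ‖ ^ a := hxva
        _ ≤ ‖ϖ‖ ^ (m + 1 + b) := zpow_le_zpow_right_of_le_one₀ hϖ0 hϖ1.le (by omega)
        _ = ‖ϖ‖ ^ (m + 1) * ‖ϖ‖ ^ b := zpow_add₀ (ne_of_gt hϖ0) _ _
        _ = ‖ϖ‖ ^ (m + 1) * ‖v‖ := by rw [hvb]
  have hfinal : ‖x‖ ≤ ‖ϖ‖ ^ (m + 1) := x.opNorm_le_bound (by positivity) hb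
  exact absurd (lt_of_le_of_lt hfinal key1) (lt_irrefl _)

end AuxNorm

set_option maxHeartbeats 2000000 in
set_option synthInstance.maxHeartbeats 1000000 in
/-- Criterion for semisimplicity of a unitary representation: let `k` be a local field,
`ℳ` a topological monoid and `(V, ρ)` a finite dimensional strictly Cartesian unitary
representation of `ℳ` over `k`. Let `𝒜` be the closure of the image of `k[ℳ]` in
`B_k(V)`. If the residue algebra `𝒜(1)/𝒜(1-)` is semisimple, then `V` decomposes as a
direct sum of irreducible subrepresentations of `ℳ`. -/
theorem semisimple_rep_of_semisimple_reduction {k M V : Type*}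
    [NontriviallyNormedField k] [CompleteSpace k] [IsUltrametricDist k] [ProperSpace k]
    (ϖ : k) (hϖ0 : 0 < ‖ϖ‖) (hϖ1 : ‖ϖ‖ < 1)
    (hdisc : ∀ x : k, x ≠ 0 → ∃ n : ℤ, ‖x‖ = ‖ϖ‖ ^ n)
    [Monoid M] [TopologicalSpace M] [ContinuousMul M]
    [NormedAddCommGroup V] [NormedSpace k V] [CompleteSpace V] [Nontrivial V]
    [FiniteDimensional k V] [IsUltrametricDist V]
    (ρ : M →* (V →L[k] V)) (hunit : ∀ m : M, ‖ρ m‖ ≤ 1)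
    (hcont : Continuous fun p : M × V => ρ p.1 p.2)
    (hcart : ∀ v : V, ∃ c : k, ‖v‖ = ‖c‖)
    (hss : IsSemisimpleRing (Red (opAlg ρ))) :
    ∃ (ι : Type) (W : ι → Submodule k V),
      (∀ i, ∀ m : M, ∀ v ∈ W i, ρ m v ∈ W i) ∧
      (∀ i, W i ≠ ⊥ ∧ ∀ W' : Submodule k V, W' ≤ W i →
        (∀ m : M, ∀ v ∈ W', ρ m v ∈ W') → W' = ⊥ ∨ W' = W i) ∧
      iSupIndep W ∧ iSup W = ⊤ := by
  classical
  set A := opAlg ρ with hA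
  have hρA : ∀ m : M, (ρ m : V →L[k] V) ∈ A :=
    fun m => (Subalgebra.le_topologicalClosure _) (Algebra.subset_adjoin ⟨m, rfl⟩)
  haveI : FiniteDimensional k A :=
    FiniteDimensional.of_injective (Subalgebra.val A).toLinearMap Subtype.val_injective
  haveI : IsArtinianRing A := isArtinian_of_tower k inferInstance
  have hnormA : ∀ a : A, ‖a‖ = ‖(a : V →L[k] V)‖ := fun _ => rfl
  -- Step 1: the Jacobson radical of `A` is trivial.
  have hJ : Ideal.jacobson (⊥ : Ideal A) = ⊥ := by
    rw [eq_bot_iff]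
    intro x hx
    rw [Submodule.mem_bot]
    by_contra hx0
    have hx1 : (x : V →L[k] V) ≠ 0 := fun h => hx0 (Subtype.ext h)
    obtain ⟨n, hn⟩ := aux_opNorm_mem_zpowers hϖ0 hϖ1 hdisc hcart hx1
    set y : A := (ϖ ^ (-n) : k) • x with hy
    have hyJ : y ∈ Ideal.jacobson (⊥ : Ideal A) := by
      rw [hy, Algebra.smul_def]
      exact Ideal.mul_mem_left _ _ hx
    have hynorm : ‖(y : V →L[k] V)‖ = 1 := by
      have hcoe : ((y : A) : V →L[k] V) = (ϖ ^ (-n) : k) • (x : V →L[k] V) := rfl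
      rw [hcoe, norm_smul, norm_zpow, hn, ← zpow_add₀ (ne_of_gt hϖ0), neg_add_cancel, zpow_zero]
    let yb : unitBall A := ⟨y, le_of_eq hynorm⟩
    have hybar : ((yb : unitBall A) : Red A) ≠ 0 := by
      intro h
      rw [show (0 : Red A) = ((0 : unitBall A) : Red A) from (RingCon.coe_zero _).symm] at h
      have h' := (RingCon.eq _).mp h
      have h'' : ‖(yb : A) - ((0 : unitBall A) : A)‖ < 1 := h'
      rw [ZeroMemClass.coe_zero, sub_zero] at h''
      have : ¬ (‖(yb : A)‖ < 1) := by
        rw [hnormA, hynorm]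
        exact lt_irrefl 1
      exact this h''
    obtain ⟨e, he, hIe⟩ := IsSemisimpleRing.ideal_eq_span_idempotent
      (R := Red A) (Ideal.span {((yb : unitBall A) : Red A)})
    have heI : e ∈ Ideal.span {((yb : unitBall A) : Red A)} := by
      rw [hIe]
      exact Ideal.subset_span rfl
    obtain ⟨rr, hrr⟩ := Submodule.mem_span_singleton.mp heI
    obtain ⟨r, rfl⟩ := Quotient.exists_rep rr
    have herb : e = ((r * yb : unitBall A) : Red A) := by
      rw [RingCon.coe_mul, ← hrr]
      rfl
    have hrbJ : ((r * yb : unitBall A) : A) ∈ Ideal.jacobson (⊥ : Ideal A) := by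
      have hcm : ((r * yb : unitBall A) : A) = (r : A) * (yb : A) := rfl
      rw [hcm]
      exact Ideal.mul_mem_left _ _ hyJ
    obtain ⟨nn, hnn⟩ := aux_nilpotent_of_mem_jacobson hrbJ
    have hpow0 : (r * yb) ^ (nn + 1) = (0 : unitBall A) := by
      apply Subtype.ext
      have hcp : (((r * yb) ^ (nn + 1) : unitBall A) : A) = ((r * yb : unitBall A) : A) ^ (nn + 1) :=
        SubmonoidClass.coe_pow _ _
      rw [hcp, pow_succ, hnn, zero_mul]
      rfl
    have he0 : e = 0 := by
      have h1 : e ^ (nn + 1) = e := he.pow_succ_eq nn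
      have h2 : e ^ (nn + 1) = 0 := by
        rw [herb, ← aux_ringcon_coe_pow, hpow0, RingCon.coe_zero]
      rw [← h1, h2]
    have hcontra : ((yb : unitBall A) : Red A) = 0 := by
      have hsp : Ideal.span {((yb : unitBall A) : Red A)} = ⊥ := by
        rw [hIe, he0]
        exact Submodule.span_zero_singleton _
      have hmem := Ideal.subset_span (Set.mem_singleton ((yb : unitBall A) : Red A))
      rw [hsp] at hmem
      exact (Submodule.mem_bot _).mp hmem
    exact hybar hcontra
  haveI hssA : IsSemisimpleRing A := aux_isSemisimpleRing hJ
  -- the module structure of `V` over `A`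
  letI instModAV : Module A V := Module.compHom V (Subalgebra.val A).toRingHom
  have hsmul : ∀ (a : A) (v : V), a • v = (a : V →L[k] V) v := fun _ _ => rfl
  letI instTower : IsScalarTower k A V :=
    ⟨fun c a v => by
      show ((c • a : A) : V →L[k] V) v = c • (((a : A) : V →L[k] V) v)
      have h1 : ((c • a : A) : V →L[k] V) = c • ((a : A) : V →L[k] V) := rfl
      rw [h1, ContinuousLinearMap.smul_apply]⟩
  haveI : @IsScalarTower k A V Algebra.toSMul (@SMulZeroClass.toSMul _ _ _ (@DistribSMul.toSMulZeroClass _ _ _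
      (@DistribMulAction.toDistribSMul _ _ _ _ (@Module.toDistribMulAction _ _ _ _ instModAV)))) _ :=
    instTower
  haveI : IsSemisimpleModule A V := inferInstance
  obtain ⟨s, hindep, hsup, hsimple⟩ := IsSemisimpleModule.exists_sSupIndep_sSup_simples_eq_top A V
  haveI : IsArtinian A V := isArtinian_of_tower k inferInstance
  have hfin : s.Finite := WellFoundedLT.finite_of_sSupIndep hindep
  haveI := hfin.to_subtype
  obtain ⟨nS, ⟨eqv⟩⟩ := Finite.exists_equiv_fin s
  let g : Fin nS → Submodule A V := fun i => (eqv.symm i : s)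
  have hgind : iSupIndep g := ((sSupIndep_iff s).mp hindep).comp eqv.symm.injective
  have hgsup : ⨆ i, g i = ⊤ := by
    rw [← hsup, sSup_eq_iSup']
    apply le_antisymm
    · exact iSup_le fun i => le_iSup (fun x : s => (x : Submodule A V)) (eqv.symm i)
    · refine iSup_le fun x => ?_
      have hgx : g (eqv x) = x := by
        simp only [g, Equiv.symm_apply_apply]
      rw [← hgx]
      exact le_iSup g (eqv x)
  have hgatom : ∀ i : Fin nS, IsAtom (g i) := fun i =>
    isSimpleModule_iff_isAtom.mp (hsimple _ (eqv.symm i).2)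
  refine ⟨Fin nS, fun i => (g i).restrictScalars k, ?_, ?_, ?_, ?_⟩
  · intro i m v hv
    exact show (⟨ρ m, hρA m⟩ : A) • v ∈ g i from (g i).smul_mem _ hv
  · intro i
    constructor
    · intro h
      apply (hgatom i).1
      rwa [Submodule.restrictScalars_eq_bot_iff] at h
    · intro W' hle hstable
      let B : Subalgebra k (V →L[k] V) :=
        { carrier := {a | ∀ v ∈ W', a v ∈ W'}
          mul_mem' := fun {a b} ha hb v hv => ha _ (hb _ hv)
          one_mem' := fun v hv => hv
          add_mem' := fun {a b} ha hb v hv => by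
            rw [ContinuousLinearMap.add_apply]
            exact W'.add_mem (ha v hv) (hb v hv)
          zero_mem' := fun v hv => by
            rw [ContinuousLinearMap.zero_apply]
            exact W'.zero_mem
          algebraMap_mem' := fun c v hv => by
            have halg : (algebraMap k (V →L[k] V) c) v = c • v := by
              rw [Algebra.algebraMap_eq_smul_one, ContinuousLinearMap.smul_apply,
                ContinuousLinearMap.one_apply]
            rw [halg]
            exact W'.smul_mem c hv }
      have hBclosed : IsClosed (B : Set (V →L[k] V)) := by
        have heq : (B : Set (V →L[k] V)) =
            ⋂ v : W', (fun a : V →L[k] V => a v.1) ⁻¹' (W' : Set V) := by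
          ext a
          simp only [Set.mem_iInter, Set.mem_preimage, SetLike.mem_coe]
          exact ⟨fun h v => h v.1 v.2, fun h v hv => h ⟨v, hv⟩⟩
        rw [heq]
        exact isClosed_iInter fun v =>
          (W'.closed_of_finiteDimensional).preimage (ContinuousLinearMap.apply k V v.1).continuous
      have hAB : A ≤ B := by
        apply Subalgebra.topologicalClosure_minimal
        · apply Algebra.adjoin_le
          rintro a ⟨m, rfl⟩
          exact fun v hv => hstable m v hv
        · exact hBclosed
      let W'' : Submodule A V :=
        { carrier := W'
          add_mem' := fun ha hb => W'.add_mem ha hb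
          zero_mem' := W'.zero_mem
          smul_mem' := fun a {v} hv => hAB a.2 v hv }
      have hW''le : W'' ≤ g i := fun v hv => hle hv
      rcases lt_or_eq_of_le hW''le with hlt | heq2
      · left
        have hb : W'' = ⊥ := (hgatom i).2 _ hlt
        rw [eq_bot_iff]
        intro v hv
        have hv' : v ∈ W'' := hv
        rw [hb] at hv'
        exact (Submodule.mem_bot k).mpr ((Submodule.mem_bot A).mp hv')
      · right
        ext v
        constructor
        · intro hv
          have hv' : v ∈ W'' := hv
          rw [heq2] at hv'
          exact hv'
        · intro hv
          have hv' : v ∈ g i := hv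
          rw [← heq2] at hv'
          exact hv'
  · intro i
    rw [disjoint_iff, eq_bot_iff]
    intro x hx
    obtain ⟨hx1, hx2⟩ := Submodule.mem_inf.mp hx
    have h1 : (⨆ j, ⨆ _ : j ≠ i, (g j).restrictScalars k) ≤
        Submodule.restrictScalars k (⨆ j, ⨆ _ : j ≠ i, g j) := by
      refine iSup_le fun j => iSup_le fun hj => ?_
      intro w hw
      exact le_iSup₂ (f := fun j (_ : j ≠ i) => g j) j hj hw
    have hx2' : x ∈ (⨆ j, ⨆ _ : j ≠ i, g j) := h1 hx2
    have hxm : x ∈ (g i ⊓ ⨆ j, ⨆ _ : j ≠ i, g j) := Submodule.mem_inf.mpr ⟨hx1, hx2'⟩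
    rw [(hgind i).eq_bot] at hxm
    exact (Submodule.mem_bot k).mpr ((Submodule.mem_bot A).mp hxm)
  · rw [eq_top_iff]
    set S : Submodule k V := ⨆ i, (g i).restrictScalars k with hS
    have hstab : ∀ (a : A) (v : V), v ∈ S → a • v ∈ S := by
      intro a v hv
      refine Submodule.iSup_induction (fun i => (g i).restrictScalars k)
        (motive := fun w => a • w ∈ S) hv ?_ ?_ ?_
      · intro j w hw
        have hmem : a • w ∈ g j := (g j).smul_mem a hw
        exact Submodule.mem_iSup_of_mem j hmem
      · show a • (0 : V) ∈ S
        rw [smul_zero]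
        exact S.zero_mem
      · intro w₁ w₂ h₁ h₂
        show a • (w₁ + w₂) ∈ S
        rw [smul_add]
        exact S.add_mem h₁ h₂
    let S' : Submodule A V :=
      { carrier := S
        add_mem' := fun h1 h2 => S.add_mem h1 h2
        zero_mem' := S.zero_mem
        smul_mem' := fun a {v} hv => hstab a v hv }
    intro v _
    have htop : (⊤ : Submodule A V) ≤ S' := by
      rw [← hgsup]
      exact iSup_le fun j => fun w hw => Submodule.mem_iSup_of_mem j hw
    exact htop trivial
end
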